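/- For all integers m, p, l ≥ 1, Σ_{n=1}^∞ H_n^{(p)} / ((n+m)·C(n+m+l, l)) = Σ_{j=0}^{l−1} C(l−1, j) · (−1)^j · { (−1)^{p−1} · H_{m+j} / (m+j)^p + Σ_{k=1}^{p−1} (−1)^{k−1} · ζ(p+1−k) / (m+j)^k }. -/

import Mathlib

open Finset Real

/-- The generalized harmonic number `H_n^{(p)} = ∑_{k=1}^n 1/k^p`. -/
noncomputable def gH (p : ℤ) (n : ℕ) : ℝ := ∑ k ∈ Finset.Icc 1 n, ((k : ℝ) ^ p)⁻¹

/-- The generalized hyperharmonic number `H_n^{(p,q)}`: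
`H_n^{(p,0)} = 1/n^p` (with `H_0^{(p,q)} = 0`) and
`H_n^{(p,q)} = ∑_{k=1}^n H_k^{(p,q-1)}` for `q ≥ 1`. -/
noncomputable def gHH (p : ℤ) : ℕ → ℕ → ℝ
  | 0, n => if n = 0 then 0 else ((n : ℝ) ^ p)⁻¹
  | q + 1, n => ∑ k ∈ Finset.Icc 1 n, gHH p q k

/-- Euler sum of generalized harmonic numbers `ζ_{H^{(p)}}(r) = ∑_{n≥1} H_n^{(p)}/n^r`. -/
noncomputable def eulerSum (p r : ℤ) : ℝ := ∑' n : ℕ+, gH p n / (n : ℝ) ^ r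

/-- Euler sum of generalized hyperharmonic numbers
`ζ_{H^{(p,q)}}(r) = ∑_{n≥1} H_n^{(p,q)}/n^r`. -/
noncomputable def eulerSumHH (p : ℤ) (q : ℕ) (r : ℤ) : ℝ := ∑' n : ℕ+, gHH p q n / (n : ℝ) ^ r

/-- Riemann zeta value at an integer argument, `ζ(s) = ∑_{n≥1} 1/n^s`. -/
noncomputable def zv (s : ℤ) : ℝ := ∑' n : ℕ+, ((n : ℝ) ^ s)⁻¹

/-- Unsigned Stirling numbers of the first kind, defined by
`x(x+1)⋯(x+q-1) = ∑_{k=0}^q [q,k] x^k`, i.e. `[n+1,k] = [n,k-1] + n·[n,k]`. -/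
def stirlingFirst : ℕ → ℕ → ℕ
  | 0, 0 => 1
  | 0, _ + 1 => 0
  | _ + 1, 0 => 0
  | n + 1, k + 1 => stirlingFirst n k + n * stirlingFirst n (k + 1)

/-- The series `μ(r,j) = ∑_{n≥1} 1/(n^r (n+j))`. -/
noncomputable def mu (r j : ℕ) : ℝ := ∑' n : ℕ+, 1 / ((n : ℝ) ^ r * ((n : ℝ) + j))

/-- `e_j(n+1, n+2, …, n+q)`: the `j`-th elementary symmetric polynomial
evaluated at the numbers `n+1, …, n+q`. -/
noncomputable def esymmVal (n q j : ℕ) : ℝ :=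
  ∑ s ∈ Finset.powersetCard j (Finset.Icc 1 q), ∏ i ∈ s, ((n : ℝ) + i)

open Filter Topology

lemma A_closed (l : ℕ) (x : ℝ) (hx : 0 < x) :
    ∑ j ∈ range (l+1), (-1:ℝ)^j * (l.choose j) * (x+j)⁻¹
      = l.factorial / ∏ j ∈ range (l+1), (x+j) := by
  induction l generalizing x with
  | zero => simp
  | succ l ih =>
    set g : ℕ → ℝ := fun j => (-1:ℝ)^j * (l.choose j) * (x+j)⁻¹ with hg
    have hg_top : ∑ j ∈ range (l+2), g j = ∑ j ∈ range (l+1), g j := by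
      rw [Finset.sum_range_succ]
      simp [hg, Nat.choose_succ_self]
    have hshift : ∑ j ∈ range (l+1), g (j+1) = (∑ j ∈ range (l+1), g j) - g 0 := by
      have h := Finset.sum_range_succ' g (l+1)
      rw [hg_top] at h
      linarith
    set F : ℕ → ℝ := fun j => (-1:ℝ)^j * ((l+1).choose j) * (x+j)⁻¹ with hF
    have hterm : ∀ j ∈ range (l+1),
        F (j+1) = g (j+1) + (-1) * ((-1:ℝ)^j * (l.choose j) * ((x+1)+j)⁻¹) := by
      intro j _
      have hx1 : (x + ((j:ℝ)+1)) = (x+1) + j := by ring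
      simp only [hF, hg, Nat.choose_succ_succ]
      push_cast
      rw [hx1]
      ring
    have key : ∑ j ∈ range (l+2), F j
        = (∑ j ∈ range (l+1), g j)
          - ∑ j ∈ range (l+1), (-1:ℝ)^j * (l.choose j) * ((x+1)+j)⁻¹ := by
      rw [Finset.sum_range_succ' F (l+1), Finset.sum_congr rfl hterm,
        Finset.sum_add_distrib, hshift, ← Finset.mul_sum]
      have hF0 : F 0 = x⁻¹ := by simp [hF]
      have hg0 : g 0 = x⁻¹ := by simp [hg]
      rw [hF0, hg0]
      ring
    rw [key, ih x hx, ih (x+1) (by linarith)]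
    have e1 : ∏ j ∈ range (l+1), (x+j) = (∏ j ∈ range (l+2), (x+j)) / (x+(l+1)) := by
      rw [Finset.prod_range_succ]
      rw [Finset.prod_range_succ]
      have h0 : x + ((l:ℝ)+1) ≠ 0 := by positivity
      have hc : ((l+1:ℕ):ℝ) = (l:ℝ)+1 := by push_cast; ring
      rw [hc]
      field_simp
      rw [Finset.prod_range_succ]
    have e2 : ∏ j ∈ range (l+1), ((x+1)+j) = (∏ j ∈ range (l+2), (x+j)) / x := by
      rw [Finset.prod_range_succ' (fun j => x + j)]
      have : ∀ j ∈ range (l+1), (x+1)+(j:ℝ) = x + ((j+1:ℕ):ℝ) := by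
        intro j _; push_cast; ring
      rw [Finset.prod_congr rfl this]
      field_simp
      simp
    rw [e1, e2]
    have hprodpos : (0:ℝ) < ∏ j ∈ range (l+2), (x+j) := by
      apply Finset.prod_pos; intro j _; positivity
    have h1 : x + ((l:ℝ)+1) ≠ 0 := by positivity
    have h2 : (x:ℝ) ≠ 0 := ne_of_gt hx
    field_simp
    rw [Nat.factorial_succ]
    push_cast
    ring

lemma B_closed (l : ℕ) (hl : 1 ≤ l) (x : ℝ) (hx : 0 < x) :
    ∑ j ∈ range l, (-1:ℝ)^j * ((l-1).choose j) * ((x+j)*(x+j+1))⁻¹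
      = l.factorial / ∏ j ∈ range (l+1), (x+j) := by
  obtain ⟨t, rfl⟩ := Nat.exists_eq_add_of_le hl
  have hsplit : ∀ j ∈ range (1+t), (-1:ℝ)^j * ((1+t-1).choose j) * ((x+j)*(x+j+1))⁻¹
      = (-1:ℝ)^j * (t.choose j) * (x+j)⁻¹ - (-1:ℝ)^j * (t.choose j) * ((x+1)+j)⁻¹ := by
    intro j _
    have h1 : (0:ℝ) < x + j := by positivity
    have h2 : (0:ℝ) < x + j + 1 := by positivity
    have : (1+t-1) = t := by omega
    rw [this]
    have e : (x+1)+(j:ℝ) = x+j+1 := by ring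
    rw [e]
    field_simp
    ring
  rw [Finset.sum_congr rfl hsplit, Finset.sum_sub_distrib]
  have ht : 1 + t = t + 1 := by omega
  rw [ht, A_closed t x hx, A_closed t (x+1) (by linarith)]
  have hP : (0:ℝ) < ∏ j ∈ range (t+2), (x+j) := by
    apply Finset.prod_pos; intro j _; positivity
  have hx1 : (0:ℝ) < x + t + 1 := by positivity
  have e1 : ∏ j ∈ range (t+1), (x+j) = (∏ j ∈ range (t+2), (x+j)) / (x+(t:ℝ)+1) := by
    have hs := Finset.prod_range_succ (fun j : ℕ => x + (j:ℝ)) (t+1)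
    rw [eq_div_iff (ne_of_gt hx1), hs]
    push_cast
    ring
  have e2 : ∏ j ∈ range (t+1), ((x+1)+j) = (∏ j ∈ range (t+2), (x+j)) / x := by
    have hs := Finset.prod_range_succ' (fun j : ℕ => x + (j:ℝ)) (t+1)
    have hc : ∀ j ∈ range (t+1), x + ((j+1:ℕ):ℝ) = (x+1)+j := by
      intro j _; push_cast; ring
    rw [Finset.prod_congr rfl hc] at hs
    rw [eq_div_iff (ne_of_gt hx), hs]
    push_cast
    ring
  rw [e1, e2, div_div_eq_mul_div, div_div_eq_mul_div, div_sub_div_same]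
  congr 1
  rw [Nat.factorial_succ]
  push_cast
  ring

lemma Qnat (l a : ℕ) : (a+l).choose l * l.factorial = ∏ j ∈ range l, (a+1+j) := by
  induction l with
  | zero => simp
  | succ l ih =>
    rw [Finset.prod_range_succ, ← ih, Nat.factorial_succ]
    have h := Nat.add_one_mul_choose_eq (a+l) l
    calc (a+(l+1)).choose (l+1) * ((l+1) * l.factorial)
        = ((a+l+1).choose (l+1) * (l+1)) * l.factorial := by ring_nf
      _ = ((a+l).succ * (a+l).choose l) * l.factorial := by rw [← h]
      _ = (a+l).choose l * l.factorial * (a+1+l) := by rw [Nat.succ_eq_add_one]; ring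




lemma gH_succ (p : ℤ) (n : ℕ) : gH p (n+1) = gH p n + (((n:ℝ)+1) ^ p)⁻¹ := by
  unfold gH
  rw [Finset.sum_Icc_succ_top (by omega : 1 ≤ n+1)]
  push_cast
  ring

lemma gH_nonneg (p : ℤ) (n : ℕ) : 0 ≤ gH p n := by
  apply Finset.sum_nonneg
  intro k hk
  have : (0:ℝ) ≤ (k:ℝ) := by positivity
  positivity

lemma gH_le (p : ℕ) (hp : 1 ≤ p) (n : ℕ) : gH p n ≤ gH 1 n := by
  apply Finset.sum_le_sum
  intro k hk
  have hk1 : 1 ≤ k := (Finset.mem_Icc.mp hk).1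
  have hk1' : (1:ℝ) ≤ (k:ℝ) := by exact_mod_cast hk1
  rw [zpow_natCast, zpow_one]
  have h1 : (k:ℝ) = (k:ℝ)^1 := (pow_one _).symm
  have h2 : (k:ℝ)^1 ≤ (k:ℝ)^p := pow_le_pow_right₀ hk1' hp
  have hkpos : (0:ℝ) < (k:ℝ) := by linarith
  apply inv_anti₀ hkpos
  rw [pow_one] at h2; exact h2

lemma gH_one_le_sqrt (n : ℕ) : gH 1 n ≤ 2 * Real.sqrt n := by
  induction n with
  | zero => simp [gH]
  | succ n ih =>
    rw [gH_succ]
    set a := Real.sqrt n with ha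
    set b := Real.sqrt (n+1) with hb
    have ha2 : a^2 = n := Real.sq_sqrt (by positivity)
    have hb2 : b^2 = (n:ℝ)+1 := by
      rw [hb]
      rw [show ((n:ℕ)+1 : ℝ) = ((n+1 : ℕ) : ℝ) by push_cast; ring] at *
      exact Real.sq_sqrt (by positivity)
    have ha0 : 0 ≤ a := Real.sqrt_nonneg _
    have hb0 : 0 < b := Real.sqrt_pos.mpr (by positivity)
    have hab : a ≤ b := by
      rw [ha, hb]; apply Real.sqrt_le_sqrt; push_cast; linarith
    have hbn : b ≤ (n:ℝ)+1 := by nlinarith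
    have key : (((n:ℝ)+1)^(1:ℤ))⁻¹ ≤ 2*(b-a) := by
      rw [zpow_one, inv_eq_one_div, div_le_iff₀ (by positivity)]
      nlinarith [sq_nonneg (b-a), mul_nonneg (sub_nonneg.2 hab) (sub_nonneg.2 hbn)]
    have : gH 1 n ≤ 2*a := by
      convert ih using 2
    push_cast
    linarith

section M1
variable (a : ℕ)

lemma tele_partial (ha : 1 ≤ a) (N : ℕ) :
    ∑ n ∈ range N, (((n:ℝ)+1)⁻¹ - ((n:ℝ)+1+a)⁻¹)
      = gH 1 a - ∑ k ∈ Icc (N+1) (N+a), ((k:ℝ))⁻¹ := by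
  induction N with
  | zero =>
    simp only [range_zero, Finset.sum_empty, zero_add]
    have : gH 1 a = ∑ k ∈ Icc 1 a, ((k:ℝ))⁻¹ := by
      unfold gH; apply Finset.sum_congr rfl; intro k _; rw [zpow_one]
    rw [this]; ring
  | succ N ih =>
    rw [Finset.sum_range_succ, ih]
    have h1 : ∑ k ∈ Icc (N+1) (N+1+a), ((k:ℝ))⁻¹
        = ∑ k ∈ Icc (N+1) (N+a), ((k:ℝ))⁻¹ + ((N+1+a:ℕ):ℝ)⁻¹ := by
      have hs := Finset.sum_Icc_succ_top (f := fun k:ℕ => ((k:ℝ))⁻¹)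
        (a := N+1) (b := N+a) (by omega)
      rw [show N+1+a = (N+a)+1 by omega]
      exact hs
    have h2 : ∑ k ∈ Icc (N+1) (N+1+a), ((k:ℝ))⁻¹
        = ((N+1:ℕ):ℝ)⁻¹ + ∑ k ∈ Icc (N+1+1) (N+1+a), ((k:ℝ))⁻¹ := by
      have hmem : N+1 ∈ Icc (N+1) (N+1+a) := by simp
      rw [Finset.sum_eq_sum_sdiff_singleton_add hmem]
      have hdiff : Icc (N+1) (N+1+a) \ {N+1} = Icc (N+1+1) (N+1+a) := by
        ext x; simp only [Finset.mem_sdiff, Finset.mem_Icc, Finset.mem_singleton]; omega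
      rw [hdiff]; ring
    have hc := h1.symm.trans h2
    push_cast at hc ⊢
    linarith

lemma tele_tail_bound (ha : 1 ≤ a) (N : ℕ) :
    ∑ k ∈ Icc (N+1) (N+a), ((k:ℝ))⁻¹ ≤ a * ((N:ℝ)+1)⁻¹ := by
  have hcard : (Icc (N+1) (N+a)).card = a := by
    rw [Nat.card_Icc]; omega
  calc ∑ k ∈ Icc (N+1) (N+a), ((k:ℝ))⁻¹
      ≤ ∑ k ∈ Icc (N+1) (N+a), ((N:ℝ)+1)⁻¹ := by
        apply Finset.sum_le_sum
        intro k hk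
        have h1 : N+1 ≤ k := (Finset.mem_Icc.mp hk).1
        have h1' : ((N:ℝ)+1) ≤ (k:ℝ) := by exact_mod_cast h1
        apply inv_anti₀ (by positivity) h1'
    _ = a * ((N:ℝ)+1)⁻¹ := by rw [Finset.sum_const, hcard]; simp

lemma tele_tail_nonneg (N : ℕ) : 0 ≤ ∑ k ∈ Icc (N+1) (N+a), ((k:ℝ))⁻¹ := by
  apply Finset.sum_nonneg; intro k hk; positivity

lemma hasSum_M1 (ha : 1 ≤ a) :
    HasSum (fun n : ℕ => ((((n:ℝ)+1) * ((n:ℝ)+1+a))⁻¹)) (gH 1 a / a) := by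
  have key : HasSum (fun n : ℕ => (((n:ℝ)+1)⁻¹ - ((n:ℝ)+1+a)⁻¹)) (gH 1 a) := by
    rw [hasSum_iff_tendsto_nat_of_nonneg]
    · have htail : Tendsto (fun N => ∑ k ∈ Icc (N+1) (N+a), ((k:ℝ))⁻¹) atTop (𝓝 0) := by
        apply squeeze_zero (tele_tail_nonneg a) (tele_tail_bound a ha)
        have := tendsto_one_div_add_atTop_nhds_zero_nat.const_mul (a:ℝ)
        simpa [one_div] using this
      have : Tendsto (fun N => gH 1 a - ∑ k ∈ Icc (N+1) (N+a), ((k:ℝ))⁻¹) atTop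
          (𝓝 (gH 1 a - 0)) := tendsto_const_nhds.sub htail
      simp only [sub_zero] at this
      apply this.congr
      intro N
      exact (tele_partial a ha N).symm
    · intro n
      have h1 : ((n:ℝ)+1) ≤ ((n:ℝ)+1+a) := by
        have : (0:ℝ) ≤ a := by positivity
        linarith
      have := inv_anti₀ (by positivity : (0:ℝ) < (n:ℝ)+1) h1
      linarith
  have hfun : (fun n : ℕ => ((((n:ℝ)+1) * ((n:ℝ)+1+a))⁻¹))
      = fun n : ℕ => (((n:ℝ)+1)⁻¹ - ((n:ℝ)+1+a)⁻¹)/(a:ℝ) := by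
    funext n
    have ha0 : (0:ℝ) < a := by exact_mod_cast ha
    have h1 : ((n:ℝ)+1) ≠ 0 := by positivity
    have h2 : ((n:ℝ)+1+a) ≠ 0 := by positivity
    field_simp
    ring
  rw [hfun]
  exact key.div_const _



lemma hasSum_pnat_of_nat {f : ℕ+ → ℝ} {S : ℝ}
    (h : HasSum (fun n : ℕ => f n.succPNat) S) : HasSum f S :=
  (Equiv.hasSum_iff Equiv.pnatEquivNat.symm).mp h

lemma hasSum_nat_of_pnat {f : ℕ+ → ℝ} {S : ℝ}
    (h : HasSum f S) : HasSum (fun n : ℕ => f n.succPNat) S :=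
  (Equiv.hasSum_iff Equiv.pnatEquivNat.symm).mpr h

lemma summable_sq : Summable (fun n : ℕ => (((n:ℝ)+1)^2)⁻¹) := by
  have h := Real.summable_one_div_nat_pow.mpr (le_refl 2)
  rw [← summable_nat_add_iff 1] at h
  apply h.congr
  intro n
  push_cast
  rw [one_div]

lemma hasSum_zv (s : ℤ) (hs : 2 ≤ s) :
    HasSum (fun n : ℕ => ((((n:ℝ)+1)) ^ s)⁻¹) (zv s) := by
  have hbound : ∀ n : ℕ, ((((n:ℝ)+1)) ^ s)⁻¹ ≤ (((n:ℝ)+1)^2)⁻¹ := by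
    intro n
    have h1 : (1:ℝ) ≤ (n:ℝ)+1 := by
      have := Nat.cast_nonneg (α:=ℝ) n; linarith
    have h2 : ((n:ℝ)+1)^(2:ℤ) ≤ ((n:ℝ)+1)^s := zpow_le_zpow_right₀ h1 hs
    have h3 : ((n:ℝ)+1)^(2:ℤ) = ((n:ℝ)+1)^(2:ℕ) := by
      norm_cast
    rw [h3] at h2
    have hp : (0:ℝ) < ((n:ℝ)+1)^(2:ℕ) := by positivity
    exact inv_anti₀ hp h2
  have hsum : Summable (fun n : ℕ => ((((n:ℝ)+1)) ^ s)⁻¹) := by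
    apply Summable.of_nonneg_of_le (fun n => by positivity) hbound summable_sq
  have hcomp : (fun n : ℕ => ((((n.succPNat : ℕ+) : ℕ):ℝ) ^ s)⁻¹)
      = fun n : ℕ => ((((n:ℝ)+1)) ^ s)⁻¹ := by
    funext n
    simp [Nat.succPNat_coe]
  have hsum' : Summable (fun q : ℕ+ => (((q:ℕ):ℝ) ^ s)⁻¹) := by
    rw [← Equiv.summable_iff Equiv.pnatEquivNat.symm]
    show Summable (fun n : ℕ => ((((n.succPNat : ℕ+) : ℕ):ℝ) ^ s)⁻¹)
    rw [hcomp]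
    exact hsum
  have h := hasSum_nat_of_pnat hsum'.hasSum
  rw [hcomp] at h
  exact h

noncomputable def Mcl (p a : ℕ) : ℝ :=
  (-1:ℝ)^(p-1) * gH 1 a / ((a:ℝ))^p
    + ∑ k ∈ Icc 1 (p-1), (-1:ℝ)^(k-1) * zv ((p:ℤ)+1-k) / (a:ℝ)^k

lemma Mcl_rec (p a : ℕ) (hp : 1 ≤ p) (ha : 1 ≤ a) :
    Mcl (p+1) a = (zv ((p:ℤ)+1) - Mcl p a) / a := by
  have ha0 : (0:ℝ) < a := by exact_mod_cast ha
  unfold Mcl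
  rw [show p+1-1 = p by omega]
  -- split off k = 1 from Icc 1 p
  have hmem : 1 ∈ Icc 1 p := by simp; omega
  rw [Finset.sum_eq_sum_sdiff_singleton_add hmem]
  have hdiff : Icc 1 p \ {1} = Icc 2 p := by
    ext x; simp only [Finset.mem_sdiff, Finset.mem_Icc, Finset.mem_singleton]; omega
  rw [hdiff]
  have hreindex : ∑ k ∈ Icc 2 p, (-1:ℝ)^(k-1) * zv (((p+1:ℕ):ℤ)+1-k) / (a:ℝ)^k
      = ∑ j ∈ Icc 1 (p-1), (-1:ℝ)^j * zv ((p:ℤ)+1-j) / (a:ℝ)^(j+1) := by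
    rw [show (2:ℕ) = 1+1 by rfl, show p = (p-1)+1 by omega, ← Finset.map_add_right_Icc]
    rw [Finset.sum_map]
    apply Finset.sum_congr rfl
    intro j hj
    simp only [addRightEmbedding_apply]
    rw [show j+1-1 = j by omega]
    congr 2
    push_cast
    ring
  rw [hreindex]
  have harg1 : (((p+1:ℕ):ℤ)+1-((1:ℕ):ℤ)) = (p:ℤ)+1 := by push_cast; ring
  rw [harg1]
  have hsign : (-1:ℝ)^p = -(-1:ℝ)^(p-1) := by
    obtain ⟨i, rfl⟩ := Nat.exists_eq_add_of_le hp
    rw [show 1+i-1 = i by omega, pow_add]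
    ring
  rw [hsign]
  have hterm : ∀ j ∈ Icc 1 (p-1), (-1:ℝ)^j * zv ((p:ℤ)+1-j) / (a:ℝ)^(j+1)
      = -((-1:ℝ)^(j-1) * zv ((p:ℤ)+1-j) / (a:ℝ)^j)/a := by
    intro j hj
    have hj1 : 1 ≤ j := (Finset.mem_Icc.mp hj).1
    obtain ⟨i, rfl⟩ := Nat.exists_eq_add_of_le hj1
    rw [show 1+i-1 = i by omega, pow_add, pow_add, pow_add]
    have hai : (a:ℝ)^i ≠ 0 := by positivity
    field_simp
  rw [Finset.sum_congr rfl hterm, ← Finset.sum_div, Finset.sum_neg_distrib]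
  field_simp
  ring

lemma hasSum_Mcl (a : ℕ) (ha : 1 ≤ a) (p : ℕ) (hp : 1 ≤ p) :
    HasSum (fun n : ℕ => (((n:ℝ)+1)^p * ((n:ℝ)+1+a))⁻¹) (Mcl p a) := by
  induction p, hp using Nat.le_induction with
  | base =>
    have h := hasSum_M1 a ha
    have hM : Mcl 1 a = gH 1 a / a := by simp [Mcl]
    rw [hM]
    have hfun : (fun n : ℕ => (((n:ℝ)+1)^1 * ((n:ℝ)+1+a))⁻¹)
        = fun n : ℕ => ((((n:ℝ)+1) * ((n:ℝ)+1+a))⁻¹) := by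
      funext n; rw [pow_one]
    rw [hfun]
    exact h
  | succ p hp ih =>
    have hs2 : (2:ℤ) ≤ (p:ℤ)+1 := by exact_mod_cast Nat.succ_le_succ hp
    have hz := hasSum_zv ((p:ℤ)+1) hs2
    have h := (hz.sub ih).div_const (a:ℝ)
    rw [Mcl_rec p a hp ha]
    have hfun : (fun n : ℕ => (((n:ℝ)+1)^(p+1) * ((n:ℝ)+1+a))⁻¹)
        = fun n : ℕ => (((((n:ℝ)+1)) ^ ((p:ℤ)+1))⁻¹
            - (((n:ℝ)+1)^p * ((n:ℝ)+1+a))⁻¹)/(a:ℝ) := by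
      funext n
      have hx : (0:ℝ) < (n:ℝ)+1 := by positivity
      have hxa : (0:ℝ) < (n:ℝ)+1+a := by positivity
      have ha0 : (0:ℝ) < (a:ℝ) := by exact_mod_cast ha
      have hzp : ((n:ℝ)+1) ^ ((p:ℤ)+1) = ((n:ℝ)+1)^(p+1) := by
        rw [show ((p:ℤ)+1) = ((p+1:ℕ):ℤ) by push_cast; ring, zpow_natCast]
      rw [hzp]
      have h1 : ((n:ℝ)+1)^(p+1) ≠ 0 := by positivity
      have h2 : ((n:ℝ)+1)^p ≠ 0 := by positivity
      field_simp
      ring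
    rw [hfun]
    exact h

lemma abel_partial (p a : ℕ) (N : ℕ) :
    ∑ n ∈ range N, gH p (n+1) * ((((n:ℝ)+1+a) * ((n:ℝ)+2+a))⁻¹)
      = (∑ n ∈ range N, (((n:ℝ)+1)^p * ((n:ℝ)+1+a))⁻¹)
        - gH p N * ((N:ℝ)+1+a)⁻¹ := by
  induction N with
  | zero => simp [gH]
  | succ N ih =>
    rw [Finset.sum_range_succ, Finset.sum_range_succ, ih, gH_succ]
    have hx1 : (0:ℝ) < (N:ℝ)+1 := by positivity
    have hx2 : (0:ℝ) < (N:ℝ)+1+a := by positivity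
    have hx3 : (0:ℝ) < (N:ℝ)+2+a := by positivity
    have hzp : (((N:ℝ)+1) ^ (p:ℤ))⁻¹ = (((N:ℝ)+1)^p)⁻¹ := by
      rw [zpow_natCast]
    rw [hzp]
    have hpow : ((N:ℝ)+1)^p ≠ 0 := by positivity
    have hcast : ((N+1:ℕ):ℝ) = (N:ℝ)+1 := by push_cast; ring
    rw [hcast]
    field_simp
    ring

lemma tail_tendsto (p a : ℕ) (hp : 1 ≤ p) :
    Tendsto (fun N : ℕ => gH p N * ((N:ℝ)+1+a)⁻¹) atTop (𝓝 0) := by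
  have hb : ∀ N : ℕ, gH p N * ((N:ℝ)+1+a)⁻¹ ≤ 2 * (Real.sqrt N)⁻¹ := by
    intro N
    rcases Nat.eq_zero_or_pos N with h0 | h1
    · subst h0; simp [gH]
    · have hN1 : (1:ℝ) ≤ (N:ℝ) := by exact_mod_cast h1
      have hsq : 0 < Real.sqrt N := Real.sqrt_pos.mpr (by linarith)
      have h2 : gH p N ≤ 2 * Real.sqrt N := le_trans (gH_le p hp N) (gH_one_le_sqrt N)
      have h3 : ((N:ℝ)+1+a)⁻¹ ≤ (N:ℝ)⁻¹ := by
        apply inv_anti₀ (by linarith)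
        have : (0:ℝ) ≤ a := by positivity
        linarith
      have h4 : Real.sqrt N * (N:ℝ)⁻¹ ≤ (Real.sqrt N)⁻¹ := by
        have hm : Real.sqrt N * Real.sqrt N = (N:ℝ) :=
          Real.mul_self_sqrt (by linarith)
        have key : ((N:ℝ))⁻¹ = (Real.sqrt N)⁻¹ * (Real.sqrt N)⁻¹ := by
          rw [← mul_inv, hm]
        rw [key, ← mul_assoc, mul_inv_cancel₀ (ne_of_gt hsq), one_mul]
      calc gH p N * ((N:ℝ)+1+a)⁻¹ ≤ (2 * Real.sqrt N) * (N:ℝ)⁻¹ := by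
            apply mul_le_mul h2 h3 (by positivity) (by positivity)
        _ = 2 * (Real.sqrt N * (N:ℝ)⁻¹) := by ring
        _ ≤ 2 * (Real.sqrt N)⁻¹ := by linarith
  have hnn : ∀ N : ℕ, 0 ≤ gH p N * ((N:ℝ)+1+a)⁻¹ := by
    intro N
    have := gH_nonneg p N
    positivity
  apply squeeze_zero hnn hb
  have h1 : Tendsto (fun N : ℕ => Real.sqrt N) atTop atTop := by
    apply tendsto_atTop_atTop.mpr
    intro b
    refine ⟨⌈(b^2)⌉₊ , fun n hn => ?_⟩
    rcases le_or_gt b 0 with hb | hb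
    · exact hb.trans (Real.sqrt_nonneg _)
    · rw [show b = Real.sqrt (b^2) by rw [Real.sqrt_sq (le_of_lt hb)]]
      apply Real.sqrt_le_sqrt
      calc b^2 ≤ (⌈(b^2)⌉₊ : ℝ) := Nat.le_ceil _
        _ ≤ n := by exact_mod_cast hn
  have h2 : Tendsto (fun N : ℕ => (Real.sqrt N)⁻¹) atTop (𝓝 0) :=
    h1.inv_tendsto_atTop
  simpa using h2.const_mul (2:ℝ)

lemma hasSum_abel (p a : ℕ) (hp : 1 ≤ p) (ha : 1 ≤ a) :
    HasSum (fun n : ℕ => gH p (n+1) * ((((n:ℝ)+1+a) * ((n:ℝ)+2+a))⁻¹)) (Mcl p a) := by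
  rw [hasSum_iff_tendsto_nat_of_nonneg]
  · have h1 : Tendsto (fun N => ∑ n ∈ range N, (((n:ℝ)+1)^p * ((n:ℝ)+1+a))⁻¹)
        atTop (𝓝 (Mcl p a)) := (hasSum_Mcl a ha p hp).tendsto_sum_nat
    have h2 := tail_tendsto p a hp
    have h3 := h1.sub h2
    simp only [sub_zero] at h3
    apply h3.congr
    intro N
    exact (abel_partial p a N).symm
  · intro n
    have := gH_nonneg p (n+1)
    positivity

lemma choose_prod (A l : ℕ) :
    ∏ j ∈ range (l+1), ((A:ℝ)+j) = (A:ℝ) * ((A + l).choose l : ℝ) * (l.factorial : ℝ) := by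
  rw [Finset.prod_range_succ' (fun j : ℕ => (A:ℝ)+(j:ℕ)) l]
  have h1 : ∀ j ∈ range l, (A:ℝ)+((j+1:ℕ):ℝ) = (((A+1+j:ℕ)):ℝ) := by
    intro j _; push_cast; ring
  rw [Finset.prod_congr rfl h1, ← Nat.cast_prod, ← Qnat l A]
  push_cast
  ring


/-- Evaluation of the series of generalized harmonic numbers over
reciprocal binomial coefficients, `m, p, l ≥ 1`. -/
theorem stmt_10 (m p l : ℕ) (hm : 1 ≤ m) (hp : 1 ≤ p) (hl : 1 ≤ l) :
    ∑' n : ℕ+, gH p n / (((n : ℝ) + m) * ((((n : ℕ) + m + l).choose l : ℕ) : ℝ))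
      = ∑ j ∈ Finset.range l, ((l - 1).choose j : ℝ) * (-1 : ℝ) ^ j *
          ((-1 : ℝ) ^ (p - 1) * gH 1 (m + j) / ((m : ℝ) + j) ^ p
            + ∑ k ∈ Finset.Icc 1 (p - 1),
                (-1 : ℝ) ^ (k - 1) * zv ((p : ℤ) + 1 - k) / ((m : ℝ) + j) ^ k) := by
  have hsum : HasSum (fun n : ℕ => ∑ j ∈ range l,
        (((l-1).choose j : ℝ) * (-1:ℝ)^j) *
          (gH p (n+1) * ((((n:ℝ)+1+((m+j:ℕ):ℝ)) * ((n:ℝ)+2+((m+j:ℕ):ℝ)))⁻¹)))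
      (∑ j ∈ range l, (((l-1).choose j : ℝ) * (-1:ℝ)^j) * Mcl p (m+j)) := by
    apply hasSum_sum
    intro j _
    exact (hasSum_abel p (m+j) hp (by omega)).mul_left _
  have hterm : ∀ n : ℕ,
      gH p (n+1) / (((n:ℝ)+1+m) * ((((n+1)+m+l).choose l : ℕ) : ℝ))
        = ∑ j ∈ range l, (((l-1).choose j : ℝ) * (-1:ℝ)^j) *
            (gH p (n+1) * ((((n:ℝ)+1+((m+j:ℕ):ℝ)) * ((n:ℝ)+2+((m+j:ℕ):ℝ)))⁻¹)) := by
    intro n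
    set A : ℕ := n+1+m with hA
    have hxpos : (0:ℝ) < (A:ℝ) := by positivity
    have hAx : ((A:ℕ):ℝ) = (n:ℝ)+1+m := by rw [hA]; push_cast; ring
    have hprod := choose_prod A l
    have hBc := B_closed l hl ((A:ℝ)) hxpos
    have hPpos : (0:ℝ) < ∏ j ∈ range (l+1), ((A:ℝ)+j) := by
      apply Finset.prod_pos; intro j _; positivity
    have hCpos : (0:ℝ) < ((A + l).choose l : ℝ) := by
      have : 0 < (A+l).choose l := Nat.choose_pos (by omega)
      exact_mod_cast this
    have hfpos : (0:ℝ) < (l.factorial : ℝ) := by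
      exact_mod_cast Nat.factorial_pos l
    have hgoal : gH p (n+1) / (((n:ℝ)+1+m) * (((A+l).choose l : ℕ) : ℝ))
        = gH p (n+1) * ((l.factorial : ℝ) / ∏ j ∈ range (l+1), ((A:ℝ)+j)) := by
      rw [hprod, ← hAx]
      rw [div_eq_mul_inv]
      congr 1
      rw [eq_div_iff (by positivity)]
      field_simp
    rw [show (n+1)+m+l = A+l from rfl, hgoal, ← hBc, Finset.mul_sum]
    apply Finset.sum_congr rfl
    intro j hj
    have e1 : (A:ℝ)+(j:ℝ) = (n:ℝ)+1+((m+j:ℕ):ℝ) := by rw [hAx]; push_cast; ring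
    have e2 : ((n:ℝ)+1+((m+j:ℕ):ℝ))+1 = (n:ℝ)+2+((m+j:ℕ):ℝ) := by push_cast; ring
    rw [e1, e2]
    ring
  have h2 : HasSum (fun n : ℕ => gH p (n+1) /
      (((n:ℝ)+1+m) * ((((n+1)+m+l).choose l : ℕ) : ℝ)))
      (∑ j ∈ range l, (((l-1).choose j : ℝ) * (-1:ℝ)^j) * Mcl p (m+j)) :=
    hsum.congr_fun hterm
  have hF : HasSum (fun q : ℕ+ => gH p q /
      (((q:ℝ) + m) * ((((q:ℕ) + m + l).choose l : ℕ) : ℝ)))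
      (∑ j ∈ range l, (((l-1).choose j : ℝ) * (-1:ℝ)^j) * Mcl p (m+j)) := by
    apply hasSum_pnat_of_nat
    apply h2.congr_fun
    intro n
    simp only [Nat.succPNat_coe, Nat.succ_eq_add_one]
    push_cast
    ring_nf
  rw [hF.tsum_eq]
  apply Finset.sum_congr rfl
  intro j hj
  unfold Mcl
  have hc : ((m+j:ℕ):ℝ) = (m:ℝ)+j := by push_cast; ring
  rw [hc]
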